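/- arXiv:0905.3876 — 6 statements merged into one kernel-verified Lean document; each statement's English description precedes it below -/
import Mathlib

section
/- Let a ∈ ℝ, ρ ∈ {1,−1}, and let γ₀ be a function from ℂ∖{0} to SL₂(ℂ) satisfying C(γ₀)(λ)·γ₀(λ)⁻¹ = ρ·[[a, λ],[−1/λ, 0]] for all λ ≠ 0. Let ε ∈ ℂ with |ε| = 1 and let τ ∈ ℂ be purely imaginary with e^τ = ε². Define δ(λ) = γ₀(ελ)⁻¹·d(ε)⁻¹·[[1,0],[τ/λ,1]]·γ₀(λ)·d(ε) for λ ≠ 0, where d(ε) = diag(1,ε). Then C(δ)(λ) = δ(λ) for all λ ≠ 0. -/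
open Matrix Complex

noncomputable section

abbrev M2 := Matrix (Fin 2) (Fin 2) ℂ

/-- `D = diag(1,-1)`. -/
def Dmat : M2 := !![1, 0; 0, -1]

/-- `d(ε) = diag(1,ε)`. -/
def dmat (ε : ℂ) : M2 := !![1, 0; 0, ε]

/-- The involution `C(γ)(λ) = D·((conj(γ(1/conj λ)))ᵀ)⁻¹·D`. -/
def Cinv (γ : ℂ → M2) (l : ℂ) : M2 :=
  Dmat * (((γ (1 / (starRingEnd ℂ l))).map (starRingEnd ℂ))ᵀ)⁻¹ * Dmat

/-- The pointwise version of `Cinv` on a single matrix. -/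
def Jmat (A : M2) : M2 := Dmat * ((A.map (starRingEnd ℂ))ᵀ)⁻¹ * Dmat

lemma DD : Dmat * Dmat = 1 := by
  simp [Dmat, Matrix.mul_fin_two, Matrix.one_fin_two]

lemma Dinv : Dmat⁻¹ = Dmat := Matrix.inv_eq_right_inv DD

lemma Jmat_mul (A B : M2) : Jmat (A*B) = Jmat A * Jmat B := by
  unfold Jmat
  rw [Matrix.map_mul, Matrix.transpose_mul, Matrix.mul_inv_rev]
  simp only [mul_assoc]
  rw [← mul_assoc Dmat Dmat, DD, one_mul]

lemma map_star_transpose (A : M2) : (A.map (starRingEnd ℂ))ᵀ = Aᴴ := by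
  rw [Matrix.conjTranspose, Matrix.transpose_map]; rfl

lemma Jmat_inv (A : M2) : Jmat A⁻¹ = (Jmat A)⁻¹ := by
  unfold Jmat
  rw [map_star_transpose, map_star_transpose, Matrix.conjTranspose_nonsing_inv,
    Matrix.mul_inv_rev, Matrix.mul_inv_rev, Dinv, mul_assoc]

lemma dmat_inv (x : ℂ) (hx : x ≠ 0) : (dmat x)⁻¹ = dmat x⁻¹ :=
  Matrix.inv_eq_right_inv
    (by simp [dmat, Matrix.mul_fin_two, Matrix.one_fin_two, mul_inv_cancel₀ hx])

lemma Jmat_dmat (x : ℂ) (hx : x ≠ 0) : Jmat (dmat x) = dmat ((starRingEnd ℂ x)⁻¹) := by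
  have hx' : starRingEnd ℂ x ≠ 0 := by simpa using hx
  have h1 : (dmat x).map (starRingEnd ℂ) = dmat (starRingEnd ℂ x) := by
    ext i j; fin_cases i <;> fin_cases j <;> simp [dmat]
  have h2 : (dmat (starRingEnd ℂ x))ᵀ = dmat (starRingEnd ℂ x) := by
    ext i j; fin_cases i <;> fin_cases j <;> simp [dmat]
  rw [Jmat, h1, h2, dmat_inv _ hx']
  simp [Dmat, dmat, Matrix.mul_fin_two]

lemma Jmat_unitri (c : ℂ) : Jmat !![1, 0; c, 1] = !![1, starRingEnd ℂ c; 0, 1] := by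
  have h1 : (!![1, 0; c, 1] : M2).map (starRingEnd ℂ) = !![1, 0; starRingEnd ℂ c, 1] := by
    ext i j; fin_cases i <;> fin_cases j <;> simp
  have h3 : (!![1, starRingEnd ℂ c; 0, 1] : M2)⁻¹ = !![1, -starRingEnd ℂ c; 0, 1] :=
    Matrix.inv_eq_right_inv (by simp [Matrix.mul_fin_two, Matrix.one_fin_two])
  have h2 : (!![1, 0; starRingEnd ℂ c, 1] : M2)ᵀ = !![1, starRingEnd ℂ c; 0, 1] := by
    ext i j; fin_cases i <;> fin_cases j <;> simp
  rw [Jmat, h1, h2, h3]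
  simp [Dmat, Matrix.mul_fin_two]

theorem delta_is_C_real (a ρ : ℝ) (hρ : ρ = 1 ∨ ρ = -1)
    (γ0 : ℂ → M2) (hdet : ∀ lam : ℂ, lam ≠ 0 → (γ0 lam).det = 1)
    (hγ0 : ∀ lam : ℂ, lam ≠ 0 →
      Cinv γ0 lam * (γ0 lam)⁻¹ = (ρ : ℂ) • !![(a : ℂ), lam; -1/lam, 0])
    (ε : ℂ) (hε : ‖ε‖ = 1) (τ : ℂ) (hτ : τ.re = 0)
    (hτε : Complex.exp τ = ε ^ 2) :
    ∀ lam : ℂ, lam ≠ 0 →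
      Cinv (fun l => (γ0 (ε * l))⁻¹ * (dmat ε)⁻¹ * !![1, 0; τ/l, 1] * γ0 l * dmat ε) lam
        = (γ0 (ε * lam))⁻¹ * (dmat ε)⁻¹ * !![1, 0; τ/lam, 1] * γ0 lam * dmat ε := by
  intro lam hlam
  have hεne : ε ≠ 0 := by intro h; rw [h] at hε; simp at hε
  have h1 : starRingEnd ℂ ε * ε = 1 := by
    rw [mul_comm, Complex.mul_conj]; norm_cast
    rw [Complex.normSq_eq_norm_sq, hε]; norm_num
  have hρ0 : (ρ:ℂ) ≠ 0 := by rcases hρ with h|h <;> simp [h]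
  have hτc : starRingEnd ℂ τ = -τ := by apply Complex.ext <;> simp [hτ]
  have hεinv : ε⁻¹ = starRingEnd ℂ ε := (eq_inv_of_mul_eq_one_left h1).symm
  have hεlam : ε * lam ≠ 0 := mul_ne_zero hεne hlam
  have hμε : ε * (1 / starRingEnd ℂ lam) = 1 / starRingEnd ℂ (ε * lam) := by
    have hcl : starRingEnd ℂ lam ≠ 0 := by simpa using hlam
    have hcε : starRingEnd ℂ ε ≠ 0 := by simpa using hεne
    rw [_root_.map_mul]
    field_simp
    linear_combination h1
  have hτμ : τ / (1 / starRingEnd ℂ lam) = τ * starRingEnd ℂ lam := by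
    rw [one_div, div_inv_eq_mul]
  have hconj2 : starRingEnd ℂ (τ * starRingEnd ℂ lam) = -(τ * lam) := by
    rw [_root_.map_mul, hτc, Complex.conj_conj]; ring
  have hdε : (dmat ε)⁻¹ = dmat (starRingEnd ℂ ε) := by rw [dmat_inv ε hεne, hεinv]
  -- Cinv of γ0 evaluated pointwise
  have hCg : ∀ l : ℂ, l ≠ 0 → Jmat (γ0 (1 / starRingEnd ℂ l))
      = ((ρ:ℂ) • !![(a:ℂ), l; -1/l, 0]) * γ0 l := by
    intro l hl
    have hu : IsUnit (γ0 l).det := by rw [hdet l hl]; exact isUnit_one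
    calc Jmat (γ0 (1 / starRingEnd ℂ l)) = Cinv γ0 l := rfl
      _ = Cinv γ0 l * ((γ0 l)⁻¹ * γ0 l) := by
          rw [Matrix.nonsing_inv_mul _ hu, mul_one]
      _ = _ := by rw [← mul_assoc, hγ0 l hl]
  -- notation
  set B : M2 := !![(a:ℂ), lam; -1/lam, 0] with hB
  set B' : M2 := !![(a:ℂ), ε*lam; -1/(ε*lam), 0] with hB'
  set U : M2 := !![1, -(τ*lam); 0, 1] with hU
  set T : M2 := !![1, 0; τ/lam, 1] with hT
  set dbar : M2 := dmat (starRingEnd ℂ ε) with hdbar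
  -- key algebraic identity
  have key : dbar * U * ((ρ:ℂ) • B) = ((ρ:ℂ) • B') * (dbar * T) := by
    rw [hdbar, hU, hB, hB', hT]
    ext i j
    fin_cases i <;> fin_cases j
    all_goals simp [dmat, Matrix.mul_apply, Fin.sum_univ_two]
    all_goals (try field_simp)
    · linear_combination (-τ) * h1
    · linear_combination (-1:ℂ) * h1
    · linear_combination (-1:ℂ) * h1
  have hB'u : IsUnit (((ρ:ℂ) • B').det) := by
    have : ((ρ:ℂ) • B').det = (ρ:ℂ)^2 := by
      rw [Matrix.det_smul, hB', Matrix.det_fin_two_of]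
      field_simp
      simp [Fintype.card_fin]
    rw [this]
    exact (pow_ne_zero 2 hρ0).isUnit
  have cancel : ∀ X : M2, ((ρ:ℂ) • B')⁻¹ * (dbar * (U * ((ρ:ℂ) • B * X)))
      = dbar * (T * X) := by
    intro X
    have h2 : dbar * (U * ((ρ:ℂ) • B * X)) = ((ρ:ℂ) • B') * (dbar * (T * X)) := by
      calc dbar * (U * ((ρ:ℂ) • B * X)) = (dbar * U * ((ρ:ℂ) • B)) * X := by
            simp only [mul_assoc]
        _ = (((ρ:ℂ) • B') * (dbar * T)) * X := by rw [key]
        _ = ((ρ:ℂ) • B') * (dbar * (T * X)) := by simp only [mul_assoc]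
    rw [h2, ← mul_assoc, Matrix.nonsing_inv_mul _ hB'u, one_mul]
  -- unfold Cinv of δ
  have e0 : Cinv (fun l => (γ0 (ε * l))⁻¹ * (dmat ε)⁻¹ * !![1, 0; τ/l, 1] * γ0 l * dmat ε) lam
      = Jmat ((γ0 (ε * (1 / starRingEnd ℂ lam)))⁻¹ * (dmat ε)⁻¹
          * !![1, 0; τ/(1 / starRingEnd ℂ lam), 1] * γ0 (1 / starRingEnd ℂ lam) * dmat ε) := rfl
  rw [e0, Jmat_mul, Jmat_mul, Jmat_mul, Jmat_mul, Jmat_inv]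
  -- evaluate each factor
  have f1 : Jmat (γ0 (ε * (1 / starRingEnd ℂ lam))) = ((ρ:ℂ) • B') * γ0 (ε * lam) := by
    rw [hμε]; exact hCg (ε * lam) hεlam
  have f2 : Jmat ((dmat ε)⁻¹) = dbar := by
    rw [Jmat_inv, Jmat_dmat ε hεne, ← hεinv, inv_inv, dmat_inv ε hεne, hεinv]
  have f3 : Jmat !![1, 0; τ/(1 / starRingEnd ℂ lam), 1] = U := by
    rw [hτμ, Jmat_unitri, hconj2, hU]
  have f4 : Jmat (γ0 (1 / starRingEnd ℂ lam)) = ((ρ:ℂ) • B) * γ0 lam := hCg lam hlam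
  have f5 : Jmat (dmat ε) = dmat ε := by
    rw [Jmat_dmat ε hεne, ← hεinv, inv_inv]
  rw [f1, f2, f3, f4, f5, Matrix.mul_inv_rev, hdε]
  simp only [mul_assoc]
  rw [cancel (γ0 lam * dmat ε)]
end
end

section
/- Let M be a 2×2 complex matrix with det M = 1 such that [[1,−s],[0,1]]·M·[[1,0],[−s,1]] = M for every real number s, and such that D·(conj M)ᵀ·D = M, where D = diag(1,−1) and conj denotes entrywise complex conjugation. Then there exist a real number a and ρ ∈ {1,−1} such that M = ρ·[[a, 1],[−1, 0]]. -/
open Matrix Complex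

noncomputable section

theorem form_of_invariant_matrix (M : M2) (hdet : M.det = 1)
    (hinv : ∀ s : ℝ, !![1, -(s : ℂ); 0, 1] * M * !![1, 0; -(s : ℂ), 1] = M)
    (hreal : Dmat * (M.map (starRingEnd ℂ))ᵀ * Dmat = M) :
    ∃ (a ρ : ℝ), (ρ = 1 ∨ ρ = -1) ∧ M = (ρ : ℂ) • !![(a : ℂ), 1; -1, 0] := by
  have e01 := congrArg (fun A => A 0 1) (hinv 1)
  have e00 := congrArg (fun A => A 0 0) (hinv 1)
  simp [Matrix.mul_apply, Matrix.vecMul, dotProduct, Fin.sum_univ_succ] at e01 e00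
  have r00 := congrArg (fun A => A 0 0) hreal
  have r01 := congrArg (fun A => A 0 1) hreal
  simp [Dmat, Matrix.mul_apply, Matrix.vecMul, dotProduct, Matrix.transpose_apply,
    Matrix.map_apply, Fin.sum_univ_succ] at r00 r01
  rw [Matrix.det_fin_two] at hdet
  have h11 : M 1 1 = 0 := e01
  have h10 : M 1 0 = -M 0 1 := by rw [h11] at e00; linear_combination -e00
  have hd : M 0 1 ^ 2 = 1 := by rw [h11, h10] at hdet; linear_combination hdet
  have hc01 : (starRingEnd ℂ) (M 0 1) = M 0 1 := by
    rw [h10, map_neg, neg_neg] at r01; exact r01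
  obtain ⟨r, hr⟩ := Complex.conj_eq_iff_real.mp hc01
  obtain ⟨b, hb⟩ := Complex.conj_eq_iff_real.mp r00
  have hr2 : r ^ 2 = 1 := by
    have : ((r ^ 2 : ℝ) : ℂ) = ((1 : ℝ) : ℂ) := by push_cast; rw [← hr]; exact hd
    exact_mod_cast this
  have hrr : r = 1 ∨ r = -1 := by
    rcases mul_eq_zero.mp (show (r - 1) * (r + 1) = 0 by nlinarith) with h | h
    · left; linarith
    · right; linarith
  refine ⟨b * r, r, hrr, ?_⟩
  ext i j
  fin_cases i <;> fin_cases j <;>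
      simp [Matrix.smul_apply, h11, h10, hr, hb]
  norm_cast
  linear_combination (-b) * hr2
end
end

section
/- Let a > 0 be real, let z ∈ ℂ∖(−∞,0], set t = log z (principal branch), and define E(λ) = γ₀(λ)⁻¹·[[1,0],[t/λ,1]] for λ ≠ 0, where γ₀(λ) = [[1/√a, −λ/√a],[0, √a]]. Then C(E)(λ)⁻¹·E(λ) = [[a + t + conj(t), λ],[−1/λ, 0]] for every λ ≠ 0 (note a + t + conj(t) = a + log|z|² is real). -/
open Matrix Complex

set_option maxHeartbeats 1000000

noncomputable section

/-- `γ₀(λ) = [[1/√a, −λ/√a],[0,√a]]`. -/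
def gamma0 (a : ℝ) (lam : ℂ) : M2 :=
  !![1 / (Real.sqrt a : ℂ), -lam / (Real.sqrt a : ℂ); 0, (Real.sqrt a : ℂ)]

/-- The slit `(−∞,0] ⊆ ℂ`. -/
def slit : Set ℂ := {z : ℂ | z.im = 0 ∧ z.re ≤ 0}

/-- `E(λ) = γ₀(λ)⁻¹ · [[1,0],[t/λ,1]]` where `t = log z`. -/
def Emap (a : ℝ) (t : ℂ) (lam : ℂ) : M2 :=
  (gamma0 a lam)⁻¹ * !![1, 0; t / lam, 1]

lemma Emap_eq (a : ℝ) (ha : 0 < a) (t lam : ℂ) (hlam : lam ≠ 0) :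
    Emap a t lam = !![(Real.sqrt a : ℂ) + t / (Real.sqrt a : ℂ), lam / (Real.sqrt a : ℂ);
      t / (lam * (Real.sqrt a : ℂ)), 1 / (Real.sqrt a : ℂ)] := by
  have hs : (Real.sqrt a : ℂ) ≠ 0 := by
    simp [Complex.ofReal_ne_zero, Real.sqrt_ne_zero', ha]
  have hinv : (gamma0 a lam)⁻¹
      = !![(Real.sqrt a : ℂ), lam / (Real.sqrt a : ℂ); 0, 1 / (Real.sqrt a : ℂ)] := by
    apply Matrix.inv_eq_right_inv
    rw [gamma0, Matrix.mul_fin_two, Matrix.one_fin_two]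
    ext i j
    fin_cases i <;> fin_cases j <;>
      simp only [Matrix.cons_val', Matrix.cons_val_zero, Matrix.cons_val_one,
        Matrix.head_cons, Matrix.empty_val', Matrix.cons_val_fin_one,
        Matrix.head_fin_const, Matrix.of_apply, Fin.zero_eta, Fin.mk_one, Fin.isValue] <;>
      (field_simp; try ring; try tauto)
  rw [Emap, hinv, Matrix.mul_fin_two]
  ext i j
  fin_cases i <;> fin_cases j <;>
    simp only [Matrix.cons_val', Matrix.cons_val_zero, Matrix.cons_val_one,
      Matrix.head_cons, Matrix.empty_val', Matrix.cons_val_fin_one,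
      Matrix.head_fin_const, Matrix.of_apply, Fin.zero_eta, Fin.mk_one, Fin.isValue] <;>
    (field_simp; try ring; try tauto)

lemma key (a : ℝ) (ha : 0 < a) (t : ℂ) (lam : ℂ) (hlam : lam ≠ 0) :
    (Cinv (Emap a t) lam)⁻¹ * Emap a t lam
      = !![(a : ℂ) + t + (starRingEnd ℂ) t, lam; -1/lam, 0] := by
  set s : ℂ := (Real.sqrt a : ℂ) with hsdef
  have hs : s ≠ 0 := by
    simp [hsdef, Complex.ofReal_ne_zero, Real.sqrt_ne_zero', ha]
  have hcs : (starRingEnd ℂ) s = s := by rw [hsdef]; exact Complex.conj_ofReal _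
  have hss : s * s = (a : ℂ) := by
    rw [hsdef, ← Complex.ofReal_mul, Real.mul_self_sqrt ha.le]
  have hclam : (starRingEnd ℂ) lam ≠ 0 := by simpa using hlam
  have hlam' : 1 / (starRingEnd ℂ) lam ≠ 0 := one_div_ne_zero hclam
  set t' := (starRingEnd ℂ) t with ht'
  clear_value t'
  clear_value s
  have h1 : ((Emap a t (1 / (starRingEnd ℂ) lam)).map (starRingEnd ℂ))ᵀ
      = !![s + t' / s, t' * lam / s; 1 / (lam * s), 1 / s] := by
    rw [Emap_eq a ha t _ hlam', ← hsdef]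
    ext i j
    fin_cases i <;> fin_cases j <;>
      simp only [Matrix.transpose_apply, Matrix.map_apply, Matrix.cons_val',
        Matrix.cons_val_zero, Matrix.cons_val_one, Matrix.head_cons, Matrix.empty_val',
        Matrix.cons_val_fin_one, Matrix.head_fin_const, Matrix.of_apply, Fin.zero_eta, Fin.mk_one, Fin.isValue,
        map_div₀, map_add, _root_.map_mul, _root_.map_one, hcs, Complex.conj_conj, ← ht'] <;>
      (field_simp [hcs]; try ring; try tauto)
  have h2 : (((Emap a t (1 / (starRingEnd ℂ) lam)).map (starRingEnd ℂ))ᵀ)⁻¹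
      = !![1 / s, -(t' * lam / s); -(1 / (lam * s)), s + t' / s] := by
    apply Matrix.inv_eq_right_inv
    rw [h1, Matrix.mul_fin_two, Matrix.one_fin_two]
    ext i j
    fin_cases i <;> fin_cases j <;>
      simp only [Matrix.cons_val', Matrix.cons_val_zero, Matrix.cons_val_one,
        Matrix.head_cons, Matrix.empty_val', Matrix.cons_val_fin_one,
        Matrix.head_fin_const, Matrix.of_apply, Fin.zero_eta, Fin.mk_one, Fin.isValue] <;>
      (field_simp [hcs]; try ring; try tauto)
  have h3 : Cinv (Emap a t) lam = !![1 / s, t' * lam / s; 1 / (lam * s), s + t' / s] := by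
    rw [Cinv, h2, Dmat, Matrix.mul_fin_two, Matrix.mul_fin_two]
    ext i j
    fin_cases i <;> fin_cases j <;>
      simp only [Matrix.cons_val', Matrix.cons_val_zero, Matrix.cons_val_one,
        Matrix.head_cons, Matrix.empty_val', Matrix.cons_val_fin_one,
        Matrix.head_fin_const, Matrix.of_apply] <;>
      ring
  have h4 : (Cinv (Emap a t) lam)⁻¹
      = !![s + t' / s, -(t' * lam / s); -(1 / (lam * s)), 1 / s] := by
    apply Matrix.inv_eq_right_inv
    rw [h3, Matrix.mul_fin_two, Matrix.one_fin_two]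
    ext i j
    fin_cases i <;> fin_cases j <;>
      simp only [Matrix.cons_val', Matrix.cons_val_zero, Matrix.cons_val_one,
        Matrix.head_cons, Matrix.empty_val', Matrix.cons_val_fin_one,
        Matrix.head_fin_const, Matrix.of_apply, Fin.zero_eta, Fin.mk_one, Fin.isValue] <;>
      (field_simp [hcs]; try ring; try tauto)
  rw [h4, Emap_eq a ha t lam hlam, ← hsdef, Matrix.mul_fin_two, ← hss]
  ext i j
  fin_cases i <;> fin_cases j <;>
    simp only [Matrix.cons_val', Matrix.cons_val_zero, Matrix.cons_val_one,
      Matrix.head_cons, Matrix.empty_val', Matrix.cons_val_fin_one,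
      Matrix.head_fin_const, Matrix.of_apply, Fin.zero_eta, Fin.mk_one, Fin.isValue, ht'] <;>
    (field_simp [hcs]; try ring; try tauto)

theorem CE_inv_E (a : ℝ) (ha : 0 < a) (z : ℂ) (hz : z ∉ slit) :
    ∀ lam : ℂ, lam ≠ 0 →
      (Cinv (Emap a (Complex.log z)) lam)⁻¹ * Emap a (Complex.log z) lam
        = !![(a : ℂ) + Complex.log z + (starRingEnd ℂ) (Complex.log z), lam;
             -1/lam, 0] := by
  intro lam hlam
  exact key a ha (Complex.log z) lam hlam
end
end

section
/- Let s be a real number with s < 0, define B(λ) = [[√(−s), −λ/√(−s)],[0, 1/√(−s)]] and w(λ) = [[0, λ],[−1/λ, 0]] for λ ∈ ℂ∖{0}. Then for every λ ≠ 0: C(w)(λ)⁻¹·w(λ) = −I, and C(B)(λ)⁻¹·C(w)(λ)⁻¹·w(λ)·B(λ) = [[s, λ],[−1/λ, 0]]. -/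
open Matrix Complex

noncomputable section

/-- `B(λ) = [[√(−s), −λ/√(−s)],[0, 1/√(−s)]]`. -/
def Bfun (s : ℝ) (lam : ℂ) : M2 :=
  !![(Real.sqrt (-s) : ℂ), -lam / (Real.sqrt (-s) : ℂ); 0, 1 / (Real.sqrt (-s) : ℂ)]

/-- `w(λ) = [[0,λ],[−1/λ,0]]`. -/
def wmat (lam : ℂ) : M2 := !![0, lam; -1/lam, 0]

theorem CB_inv_B_negative (s : ℝ) (hs : s < 0) :
    ∀ lam : ℂ, lam ≠ 0 →
      (Cinv wmat lam)⁻¹ * wmat lam = -(1 : M2) ∧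
      (Cinv (Bfun s) lam)⁻¹ * (Cinv wmat lam)⁻¹ * wmat lam * Bfun s lam
        = !![(s : ℂ), lam; -1/lam, 0] := by
  intro lam hl
  have hl' : (starRingEnd ℂ) lam ≠ 0 := by simpa using hl
  have hspos : (0:ℝ) < -s := by linarith
  have haR : Real.sqrt (-s) ≠ 0 := by positivity
  have ha : (Real.sqrt (-s) : ℂ) ≠ 0 := by exact_mod_cast haR
  have ha2 : (Real.sqrt (-s) : ℂ) * (Real.sqrt (-s) : ℂ) = (-s : ℂ) := by
    norm_cast
    exact Real.mul_self_sqrt hspos.le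
  -- the matrix inside Cinv wmat
  have hwin : (((wmat (1 / (starRingEnd ℂ lam))).map (starRingEnd ℂ))ᵀ)⁻¹
      = !![0, lam; -1/lam, 0] := by
    apply inv_eq_right_inv
    ext i j
    fin_cases i <;> fin_cases j <;>
      simp [wmat, Matrix.mul_apply, Fin.sum_univ_two, Matrix.transpose_apply,
        Matrix.map_apply, Matrix.one_apply, map_div₀] <;> field_simp
  have hCw : Cinv wmat lam = !![0, -lam; 1/lam, 0] := by
    rw [Cinv, hwin, Dmat]
    ext i j
    fin_cases i <;> fin_cases j <;> simp [Matrix.mul_fin_two] <;> ring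
  have hCwinv : (Cinv wmat lam)⁻¹ = !![0, lam; -1/lam, 0] := by
    rw [hCw]
    apply inv_eq_right_inv
    ext i j
    fin_cases i <;> fin_cases j <;> simp [Matrix.mul_fin_two, Matrix.one_fin_two] <;>
      field_simp
  have h1 : (Cinv wmat lam)⁻¹ * wmat lam = -(1 : M2) := by
    rw [hCwinv, wmat]
    ext i j
    fin_cases i <;> fin_cases j <;>
      simp [Matrix.mul_fin_two, Matrix.one_fin_two] <;> field_simp
  refine ⟨h1, ?_⟩
  -- Cinv of B
  have hBin : (((Bfun s (1 / (starRingEnd ℂ lam))).map (starRingEnd ℂ))ᵀ)⁻¹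
      = !![1/(Real.sqrt (-s):ℂ), 0; 1/(lam * (Real.sqrt (-s):ℂ)), (Real.sqrt (-s):ℂ)] := by
    apply inv_eq_right_inv
    ext i j
    fin_cases i <;> fin_cases j <;>
      simp [Bfun, Matrix.mul_apply, Fin.sum_univ_two, Matrix.transpose_apply,
        Matrix.map_apply, Matrix.one_apply, map_div₀] <;> field_simp <;> ring
  have hCB : Cinv (Bfun s) lam
      = !![1/(Real.sqrt (-s):ℂ), 0; -(1/(lam * (Real.sqrt (-s):ℂ))), (Real.sqrt (-s):ℂ)] := by
    rw [Cinv, hBin, Dmat]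
    ext i j
    fin_cases i <;> fin_cases j <;> simp [Matrix.mul_fin_two] <;> ring
  have hCBinv : (Cinv (Bfun s) lam)⁻¹
      = !![(Real.sqrt (-s):ℂ), 0; 1/(lam * (Real.sqrt (-s):ℂ)), 1/(Real.sqrt (-s):ℂ)] := by
    rw [hCB]
    apply inv_eq_right_inv
    ext i j
    fin_cases i <;> fin_cases j <;>
      simp [Matrix.mul_fin_two, Matrix.one_fin_two] <;> field_simp <;> ring
  calc (Cinv (Bfun s) lam)⁻¹ * (Cinv wmat lam)⁻¹ * wmat lam * Bfun s lam
      = (Cinv (Bfun s) lam)⁻¹ * ((Cinv wmat lam)⁻¹ * wmat lam) * Bfun s lam := by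
        rw [mul_assoc ((Cinv (Bfun s) lam)⁻¹)]
    _ = !![(s : ℂ), lam; -1/lam, 0] := by
        rw [h1, hCBinv, Bfun,
          show ((s:ℂ)) = -((Real.sqrt (-s):ℂ) * (Real.sqrt (-s):ℂ)) by rw [ha2]; ring]
        ext i j
        fin_cases i <;> fin_cases j <;>
          simp [Matrix.mul_apply, Fin.sum_univ_two, Matrix.one_apply] <;>
          field_simp <;> ring

end
end

section
/- Fix λ ∈ ℂ, λ ≠ 0, and let f₀(z) = Σ_{i≥0} z^i/((i!)²·λ^{2i}) and f₁(z) = −(2/λ)·Σ_{i≥1} (1 + 1/2 + ⋯ + 1/i)·z^i/((i!)²·λ^{2i}) (both series converge for all z ∈ ℂ). Then for every z ∈ ℂ, f₀(z)·(f₀(z) + λ·z·f₁'(z)) − f₁(z)·λ·z·f₀'(z) = 1; that is, the matrix L₀(z,λ) with rows (f₀, λ·z·f₀') and (f₁, f₀ + λ·z·f₁') has determinant 1. -/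
open Matrix Complex

noncomputable section

/-- `f₀(z,λ) = Σ_{i≥0} z^i/((i!)²·λ^{2i})`. -/
def f0 (lam z : ℂ) : ℂ := ∑' i : ℕ, z ^ i / ((i.factorial : ℂ) ^ 2 * lam ^ (2 * i))

/-- harmonic number `1 + 1/2 + ⋯ + 1/i`. -/
def harm (i : ℕ) : ℂ := ∑ j ∈ Finset.range i, (1 : ℂ) / (j + 1)

/-- `f₁(z,λ) = −(2/λ)·Σ_{i≥1} (1+⋯+1/i)·z^i/((i!)²·λ^{2i})`. -/
def f1 (lam z : ℂ) : ℂ :=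
  -(2 / lam) * ∑' i : ℕ, harm i * z ^ i / ((i.factorial : ℂ) ^ 2 * lam ^ (2 * i))

/-- `L₀(z,λ)`, with rows `(f₀, λ·z·f₀')` and `(f₁, f₀ + λ·z·f₁')`. -/
def L0 (lam z : ℂ) : M2 :=
  !![f0 lam z, lam * z * deriv (f0 lam) z;
     f1 lam z, f0 lam z + lam * z * deriv (f1 lam) z]

namespace DetL0Aux

/-- coefficient of f0 -/
def aa (lam : ℂ) (i : ℕ) : ℂ := ((i.factorial : ℂ) ^ 2 * lam ^ (2 * i))⁻¹

/-- coefficient of the auxiliary series g -/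
def bb (lam : ℂ) (i : ℕ) : ℂ := harm i * aa lam i

/-- derivative shift of coefficients -/
def Dc (c : ℕ → ℂ) (i : ℕ) : ℂ := ((i : ℂ) + 1) * c (i + 1)

/-- boundedness of coefficients -/
def Bnd (c : ℕ → ℂ) (C A : ℝ) : Prop :=
  0 ≤ C ∧ 0 ≤ A ∧ ∀ i, ‖c i‖ ≤ C * A ^ i / i.factorial

lemma bnd_shift {c : ℕ → ℂ} {C A : ℝ} (h : Bnd c C A) : Bnd (Dc c) (C * A) A := by
  obtain ⟨hC, hA, hc⟩ := h
  refine ⟨by positivity, hA, fun i => ?_⟩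
  have h1 : ‖Dc c i‖ = ((i : ℝ) + 1) * ‖c (i + 1)‖ := by
    rw [Dc, norm_mul]
    congr 1
    rw [show ((i : ℂ) + 1) = ((i + 1 : ℕ) : ℂ) by push_cast; ring, Complex.norm_natCast]
    push_cast; ring
  rw [h1]
  have h2 := hc (i + 1)
  have h3 : ((i : ℝ) + 1) * ‖c (i + 1)‖ ≤ ((i : ℝ) + 1) * (C * A ^ (i + 1) / (i + 1).factorial) := by
    apply mul_le_mul_of_nonneg_left h2 (by positivity)
  refine h3.trans (le_of_eq ?_)
  rw [Nat.factorial_succ]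
  have hfac : ((i.factorial : ℝ)) ≠ 0 := Nat.cast_ne_zero.mpr i.factorial_ne_zero
  push_cast
  field_simp
  ring

lemma bnd_mulnat {c : ℕ → ℂ} {C A : ℝ} (h : Bnd c C A) :
    Bnd (fun i => ((i : ℂ) + 1) * c i) C (2 * A) := by
  obtain ⟨hC, hA, hc⟩ := h
  refine ⟨hC, by positivity, fun i => ?_⟩
  have h1 : ‖((i : ℂ) + 1) * c i‖ = ((i : ℝ) + 1) * ‖c i‖ := by
    rw [norm_mul]
    congr 1
    rw [show ((i : ℂ) + 1) = ((i + 1 : ℕ) : ℂ) by push_cast; ring, Complex.norm_natCast]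
    push_cast; ring
  rw [h1]
  have h2 : ((i : ℝ) + 1) ≤ 2 ^ i := by
    exact_mod_cast Nat.succ_le_of_lt (Nat.lt_two_pow_self (n := i))
  calc ((i : ℝ) + 1) * ‖c i‖ ≤ (2 : ℝ) ^ i * (C * A ^ i / i.factorial) := by
        apply mul_le_mul h2 (hc i) (norm_nonneg _) (by positivity)
    _ = C * (2 * A) ^ i / i.factorial := by rw [mul_pow]; ring

lemma summable_bnd {c : ℕ → ℂ} {C A : ℝ} (h : Bnd c C A) (z : ℂ) :
    Summable (fun i => c i * z ^ i) := by
  obtain ⟨hC, hA, hc⟩ := h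
  apply Summable.of_norm_bounded (g := fun i => C * (A * ‖z‖) ^ i / i.factorial)
  · have := (Real.summable_pow_div_factorial (A * ‖z‖)).mul_left C
    simpa [mul_div_assoc] using this
  · intro i
    rw [norm_mul, norm_pow]
    calc ‖c i‖ * ‖z‖ ^ i ≤ (C * A ^ i / i.factorial) * ‖z‖ ^ i := by
          apply mul_le_mul_of_nonneg_right (hc i) (by positivity)
      _ = C * (A * ‖z‖) ^ i / i.factorial := by rw [mul_pow]; ring

lemma deriv_bound {c : ℕ → ℂ} {C A : ℝ} (h : Bnd c C A) {R : ℝ} (hR : 1 ≤ R)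
    {y : ℂ} (hy : ‖y‖ ≤ R) (i : ℕ) :
    ‖c i * ((i : ℂ) * y ^ (i - 1))‖ ≤ C * (2 * A * R) ^ i / i.factorial := by
  obtain ⟨hC, hA, hc⟩ := h
  have hR0 : (0 : ℝ) ≤ R := le_trans zero_le_one hR
  have h1 : ‖c i * ((i : ℂ) * y ^ (i - 1))‖ = ‖c i‖ * ((i : ℝ) * ‖y‖ ^ (i - 1)) := by
    rw [norm_mul, norm_mul, norm_pow, Complex.norm_natCast]
  rw [h1]
  have h2 : ‖y‖ ^ (i - 1) ≤ R ^ i := by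
    calc ‖y‖ ^ (i - 1) ≤ R ^ (i - 1) := pow_le_pow_left₀ (norm_nonneg _) hy _
      _ ≤ R ^ i := pow_le_pow_right₀ hR (Nat.sub_le i 1)
  have h3 : (i : ℝ) ≤ 2 ^ i := by exact_mod_cast (Nat.lt_two_pow_self (n := i)).le
  calc ‖c i‖ * ((i : ℝ) * ‖y‖ ^ (i - 1))
      ≤ (C * A ^ i / i.factorial) * (2 ^ i * R ^ i) := by
        apply mul_le_mul (hc i) _ (by positivity) (by positivity)
        apply mul_le_mul h3 h2 (by positivity) (by positivity)
    _ = C * (2 * A * R) ^ i / i.factorial := by rw [mul_pow, mul_pow]; ring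

lemma hasDerivAt_psum {c : ℕ → ℂ} {C A : ℝ} (h : Bnd c C A) (z : ℂ) :
    HasDerivAt (fun w => ∑' i, c i * w ^ i) (∑' i, Dc c i * z ^ i) z := by
  set R : ℝ := ‖z‖ + 1 with hRdef
  have hR1 : (1 : ℝ) ≤ R := by simp [hRdef]
  have hu : Summable (fun i => C * (2 * A * R) ^ i / i.factorial) := by
    have := (Real.summable_pow_div_factorial (2 * A * R)).mul_left C
    simpa [mul_div_assoc] using this
  have hR0 : (0 : ℝ) < R := lt_of_lt_of_le one_pos hR1
  have key : HasDerivAt (fun w => ∑' i, c i * w ^ i)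
      (∑' i, c i * ((i : ℂ) * z ^ (i - 1))) z :=
    hasDerivAt_tsum_of_isPreconnected (g := fun i w => c i * w ^ i)
      (g' := fun i w => c i * ((i : ℂ) * w ^ (i - 1))) (y₀ := (0 : ℂ)) hu Metric.isOpen_ball
      ((convex_ball (0 : ℂ) R).isPreconnected)
      (fun n y _ => (hasDerivAt_pow n y).const_mul (c n))
      (fun n y hy => deriv_bound h hR1
        (by simpa using (mem_ball_iff_norm.mp hy).le) n)
      (Metric.mem_ball_self hR0) (summable_bnd h 0)
      (by rw [mem_ball_iff_norm]; simp [hRdef])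
  convert key using 1
  have hs : Summable (fun i => c i * ((i : ℂ) * z ^ (i - 1))) := by
    apply Summable.of_norm_bounded hu
    intro i
    exact deriv_bound h hR1 (by simp [hRdef]) i
  rw [Summable.tsum_eq_zero_add hs]
  simp only [Nat.cast_zero, zero_mul, mul_zero, zero_add]
  apply tsum_congr
  intro i
  simp only [Dc]
  push_cast
  ring

/-- shift identity at the level of sums -/
lemma shift_sum {c : ℕ → ℂ} {C A : ℝ} (h : Bnd c C A) (z : ℂ) :
    (∑' i, c i * z ^ i) + z * (∑' i, Dc c i * z ^ i)
      = ∑' i : ℕ, ((i : ℂ) + 1) * c i * z ^ i := by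
  have hs1 : Summable (fun i : ℕ => c i * z ^ i) := summable_bnd h z
  have hs2 : Summable (fun i : ℕ => ((i : ℂ) + 1) * c i * z ^ i) := by
    have := summable_bnd (bnd_mulnat h) z
    simpa [mul_assoc] using this
  have hs3 : Summable (fun i : ℕ => ((i : ℂ)) * c i * z ^ i) := by
    have : (fun i : ℕ => ((i : ℂ)) * c i * z ^ i)
        = fun i : ℕ => ((i : ℂ) + 1) * c i * z ^ i - c i * z ^ i := by
      funext i; ring
    rw [this]
    exact hs2.sub hs1
  have key : z * (∑' i, Dc c i * z ^ i) = ∑' i : ℕ, ((i : ℂ)) * c i * z ^ i := by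
    rw [← tsum_mul_left, Summable.tsum_eq_zero_add hs3]
    simp only [Nat.cast_zero, zero_mul, zero_add]
    apply tsum_congr
    intro i
    simp only [Dc]
    push_cast
    ring
  rw [key, ← Summable.tsum_add hs1 hs3]
  apply tsum_congr
  intro i
  ring

lemma norm_harm_le (i : ℕ) : ‖harm i‖ ≤ (i : ℝ) := by
  unfold harm
  calc ‖∑ j ∈ Finset.range i, (1 : ℂ) / (j + 1)‖
      ≤ ∑ j ∈ Finset.range i, ‖(1 : ℂ) / (j + 1)‖ := norm_sum_le _ _
    _ ≤ ∑ j ∈ Finset.range i, (1 : ℝ) := by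
        apply Finset.sum_le_sum
        intro j _
        rw [norm_div, norm_one]
        rw [div_le_one (by
          rw [show ((j : ℂ) + 1) = ((j + 1 : ℕ) : ℂ) by push_cast; ring]
          rw [Complex.norm_natCast]
          positivity)]
        rw [show ((j : ℂ) + 1) = ((j + 1 : ℕ) : ℂ) by push_cast; ring, Complex.norm_natCast]
        exact_mod_cast Nat.succ_le_succ (Nat.zero_le j)
    _ = (i : ℝ) := by simp

lemma bnd_aa (lam : ℂ) (hlam : lam ≠ 0) : Bnd (aa lam) 1 ((‖lam‖⁻¹) ^ 2) := by
  refine ⟨zero_le_one, by positivity, fun i => ?_⟩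
  have hfac : (0 : ℝ) < i.factorial := by exact_mod_cast i.factorial_pos
  have h1 : ‖aa lam i‖ = ((i.factorial : ℝ) ^ 2 * ‖lam‖ ^ (2 * i))⁻¹ := by
    rw [aa, norm_inv, norm_mul, norm_pow, norm_pow, Complex.norm_natCast]
  rw [h1]
  have hl : (0 : ℝ) < ‖lam‖ := norm_pos_iff.mpr hlam
  rw [mul_inv, one_mul]
  have h2 : ((i.factorial : ℝ) ^ 2)⁻¹ ≤ (i.factorial : ℝ)⁻¹ := by
    apply inv_anti₀ hfac
    calc (i.factorial : ℝ) = i.factorial * 1 := by ring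
      _ ≤ i.factorial * i.factorial := by
          apply mul_le_mul_of_nonneg_left _ hfac.le
          exact_mod_cast i.factorial_pos
      _ = (i.factorial : ℝ) ^ 2 := by ring
  have h3 : (‖lam‖ ^ (2 * i))⁻¹ = ((‖lam‖⁻¹) ^ 2) ^ i := by
    rw [← inv_pow, ← pow_mul, pow_mul]
  calc ((i.factorial : ℝ) ^ 2)⁻¹ * (‖lam‖ ^ (2 * i))⁻¹
      ≤ (i.factorial : ℝ)⁻¹ * ((‖lam‖⁻¹) ^ 2) ^ i := by
        rw [h3]
        apply mul_le_mul_of_nonneg_right h2 (by positivity)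
    _ = (‖lam‖⁻¹ ^ 2) ^ i / i.factorial := by ring

lemma bnd_bb (lam : ℂ) (hlam : lam ≠ 0) : Bnd (bb lam) 1 (2 * (‖lam‖⁻¹) ^ 2) := by
  obtain ⟨_, hA, haa⟩ := bnd_aa lam hlam
  refine ⟨zero_le_one, by positivity, fun i => ?_⟩
  have h1 : ‖bb lam i‖ = ‖harm i‖ * ‖aa lam i‖ := norm_mul _ _
  rw [h1]
  have h2 : (i : ℝ) ≤ 2 ^ i := by exact_mod_cast (Nat.lt_two_pow_self (n := i)).le
  calc ‖harm i‖ * ‖aa lam i‖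
      ≤ (2 : ℝ) ^ i * (1 * (‖lam‖⁻¹ ^ 2) ^ i / i.factorial) := by
        apply mul_le_mul ((norm_harm_le i).trans h2) (haa i) (norm_nonneg _) (by positivity)
    _ = 1 * (2 * ‖lam‖⁻¹ ^ 2) ^ i / i.factorial := by rw [mul_pow]; ring

lemma harm_succ (i : ℕ) : harm (i + 1) = harm i + 1 / ((i : ℂ) + 1) := by
  rw [harm, harm, Finset.sum_range_succ]

lemma aa_zero (lam : ℂ) : aa lam 0 = 1 := by simp [aa]

lemma cast_fact_ne (i : ℕ) : ((i.factorial : ℂ)) ≠ 0 :=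
  Nat.cast_ne_zero.mpr i.factorial_ne_zero

lemma cast_succ_ne (i : ℕ) : ((i : ℂ) + 1) ≠ 0 := by
  rw [show ((i : ℂ) + 1) = ((i + 1 : ℕ) : ℂ) by push_cast; ring]
  exact Nat.cast_ne_zero.mpr (Nat.succ_ne_zero i)

lemma aa_succ (lam : ℂ) (hlam : lam ≠ 0) (i : ℕ) :
    aa lam (i + 1) * (((i : ℂ) + 1) ^ 2 * lam ^ 2) = aa lam i := by
  have h1 := cast_fact_ne i
  have h2 := cast_succ_ne i
  rw [aa, aa, Nat.factorial_succ]
  push_cast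
  rw [show 2 * (i + 1) = 2 * i + 2 by ring, pow_add]
  field_simp

lemma key_id_a (lam : ℂ) (hlam : lam ≠ 0) (i : ℕ) :
    ((i : ℂ) + 1) * Dc (aa lam) i * lam ^ 2 = aa lam i := by
  rw [Dc, ← aa_succ lam hlam i]
  ring

lemma key_id_b (lam : ℂ) (hlam : lam ≠ 0) (i : ℕ) :
    ((i : ℂ) + 1) * Dc (bb lam) i * lam ^ 2 = bb lam i + Dc (aa lam) i * lam ^ 2 := by
  have hs := aa_succ lam hlam i
  have h := cast_succ_ne i
  have hinv : ((i : ℂ) + 1) * ((i : ℂ) + 1)⁻¹ = 1 := mul_inv_cancel₀ h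
  rw [Dc, Dc, bb, bb, harm_succ]
  linear_combination (harm i) * hs + (((i : ℂ) + 1) * aa lam (i + 1) * lam ^ 2) * hinv

end DetL0Aux

open DetL0Aux in
theorem det_L0_eq_one (lam : ℂ) (hlam : lam ≠ 0) :
    ∀ z : ℂ,
      f0 lam z * (f0 lam z + lam * z * deriv (f1 lam) z)
        - f1 lam z * (lam * z * deriv (f0 lam) z) = 1 ∧
      (L0 lam z).det = 1 := by
  -- coefficient bounds
  have hba := bnd_aa lam hlam
  have hbb := bnd_bb lam hlam
  have hbDa := bnd_shift hba
  have hbDb := bnd_shift hbb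
  have hbDDa := bnd_shift hbDa
  have hbDDb := bnd_shift hbDb
  -- the series and their derivatives
  set F : ℂ → ℂ := fun w => ∑' i, aa lam i * w ^ i with hFdef
  set F1 : ℂ → ℂ := fun w => ∑' i, Dc (aa lam) i * w ^ i with hF1def
  set F2 : ℂ → ℂ := fun w => ∑' i, Dc (Dc (aa lam)) i * w ^ i with hF2def
  set G : ℂ → ℂ := fun w => ∑' i, bb lam i * w ^ i with hGdef
  set G1 : ℂ → ℂ := fun w => ∑' i, Dc (bb lam) i * w ^ i with hG1def
  set G2 : ℂ → ℂ := fun w => ∑' i, Dc (Dc (bb lam)) i * w ^ i with hG2def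
  have hF : ∀ z, HasDerivAt F (F1 z) z := fun z => hasDerivAt_psum hba z
  have hF1 : ∀ z, HasDerivAt F1 (F2 z) z := fun z => hasDerivAt_psum hbDa z
  have hG : ∀ z, HasDerivAt G (G1 z) z := fun z => hasDerivAt_psum hbb z
  have hG1 : ∀ z, HasDerivAt G1 (G2 z) z := fun z => hasDerivAt_psum hbDb z
  have hlam2 : lam ^ 2 ≠ 0 := pow_ne_zero 2 hlam
  -- the ODE relations
  have RF : ∀ z : ℂ, F1 z + z * F2 z = F z / lam ^ 2 := by
    intro z
    rw [hF1def, hF2def, hFdef]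
    simp only
    rw [shift_sum hbDa z, ← tsum_div_const]
    apply tsum_congr
    intro i
    rw [← key_id_a lam hlam i]
    field_simp
  have RG : ∀ z : ℂ, G1 z + z * G2 z = G z / lam ^ 2 + F1 z := by
    intro z
    rw [hG1def, hG2def, hGdef, hF1def]
    simp only
    rw [shift_sum hbDb z, ← tsum_div_const]
    rw [← Summable.tsum_add ((summable_bnd hbb z).div_const (lam ^ 2)) (summable_bnd hbDa z)]
    apply tsum_congr
    intro i
    have h := key_id_b lam hlam i
    field_simp
    linear_combination h * z ^ i
  -- the Wronskian-like function
  set W : ℂ → ℂ := fun w => F w ^ 2 - 2 * w * (F w * G1 w - G w * F1 w) with hWdef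
  have hW0 : ∀ z : ℂ, HasDerivAt W 0 z := by
    intro z
    have h := ((hF z).pow 2).sub
      (((hasDerivAt_const z (2 : ℂ)).mul (hasDerivAt_id z)).mul
        (((hF z).mul (hG1 z)).sub ((hG z).mul (hF1 z))))
    simp only [id_eq] at h
    have hW : W = fun w => F w ^ 2 - 2 * w * (F w * G1 w - G w * F1 w) := hWdef
    rw [hW]
    have e : (fun w => F w ^ 2 - 2 * w * (F w * G1 w - G w * F1 w))
        = F ^ 2 - (fun _ => (2 : ℂ)) * id * (F * G1 - G * F1) := rfl
    rw [e]
    refine h.congr_deriv ?_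
    have hzF2 : z * F2 z = F z / lam ^ 2 - F1 z := by linear_combination RF z
    have hzG2 : z * G2 z = G z / lam ^ 2 + F1 z - G1 z := by linear_combination RG z
    simp only [Pi.mul_apply, Pi.sub_apply, id_eq, Nat.cast_ofNat, Nat.add_one_sub_one, pow_one]
    linear_combination (2 * G z) * hzF2 - (2 * F z) * hzG2
  have hWconst : ∀ z : ℂ, W z = W 0 := by
    intro z
    exact is_const_of_deriv_eq_zero (fun x => (hW0 x).differentiableAt)
      (fun x => (hW0 x).deriv) z 0
  have hF0 : F 0 = 1 := by
    rw [hFdef]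
    simp only
    rw [tsum_eq_single 0 (fun i hi => by simp [zero_pow hi])]
    simp [aa_zero]
  have hW1 : ∀ z : ℂ, W z = 1 := by
    intro z
    rw [hWconst z, hWdef]
    simp [hF0]
  -- identification with f0, f1
  have hf0F : f0 lam = F := by
    funext w
    rw [f0, hFdef]
    apply tsum_congr
    intro i
    rw [aa, div_eq_mul_inv]
    ring
  have hf1G : f1 lam = fun w => -(2 / lam) * G w := by
    funext w
    rw [f1, hGdef]
    simp only
    congr 1
    apply tsum_congr
    intro i
    rw [bb, aa, div_eq_mul_inv]
    ring
  intro z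
  have hd0 : deriv (f0 lam) z = F1 z := by rw [hf0F]; exact (hF z).deriv
  have hd1 : deriv (f1 lam) z = -(2 / lam) * G1 z := by
    rw [hf1G]
    exact (HasDerivAt.const_mul (-(2 / lam)) (hG z)).deriv
  have main : f0 lam z * (f0 lam z + lam * z * deriv (f1 lam) z)
      - f1 lam z * (lam * z * deriv (f0 lam) z) = 1 := by
    rw [hd0, hd1, hf0F, hf1G]
    simp only
    have hw := hW1 z
    rw [hWdef] at hw
    simp only at hw
    field_simp
    linear_combination hw
  exact ⟨main, by rw [L0, Matrix.det_fin_two_of]; linear_combination main⟩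
end
end

section
/- Let u : (0,∞) → ℝ be twice continuously differentiable and suppose (1/4)·(u''(r) + u'(r)/r) − (1/4)·e^{2u(r)} + (4/r²)·e^{−2u(r)} = 0 for all r > 0 (this is the radially reduced Gauss equation with mean curvature H = 1/2 and Hopf differential coefficient Q = 2/(zH)). Define w(x) = u(x²/16) − log 2 + (1/2)·log(x²/16) for x > 0. Then w''(x) + w'(x)/x = 2·sinh(2·w(x)) for all x > 0 (the radial sinh-Gordon equation). -/
theorem radial_gauss_to_sinh_gordon (u : ℝ → ℝ)
    (hu : ContDiffOn ℝ 2 u (Set.Ioi 0))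
    (heq : ∀ r : ℝ, 0 < r →
      (1 / 4) * (deriv (deriv u) r + deriv u r / r)
        - (1 / 4) * Real.exp (2 * u r) + (4 / r ^ 2) * Real.exp (-(2 * u r)) = 0)
    (w : ℝ → ℝ)
    (hw : ∀ x : ℝ, w x = u (x ^ 2 / 16) - Real.log 2 + (1 / 2) * Real.log (x ^ 2 / 16)) :
    ∀ x : ℝ, 0 < x →
      deriv (deriv w) x + deriv w x / x = 2 * Real.sinh (2 * w x) := by
  have hwf : w = fun x => u (x ^ 2 / 16) - Real.log 2 + (1 / 2) * Real.log (x ^ 2 / 16) :=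
    funext hw
  have hdu : ∀ s : ℝ, 0 < s → HasDerivAt u (deriv u s) s := fun s hs =>
    ((hu.differentiableOn (by norm_num)).differentiableAt (isOpen_Ioi.mem_nhds hs)).hasDerivAt
  have hu' : ContDiffOn ℝ 1 (deriv u) (Set.Ioi 0) :=
    hu.deriv_of_isOpen isOpen_Ioi (by norm_num)
  have hddu : ∀ s : ℝ, 0 < s → HasDerivAt (deriv u) (deriv (deriv u) s) s := fun s hs =>
    ((hu'.differentiableOn (by norm_num)).differentiableAt (isOpen_Ioi.mem_nhds hs)).hasDerivAt
  -- inner function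
  have hinner : ∀ y : ℝ, HasDerivAt (fun t : ℝ => t ^ 2 / 16) (y / 8) y := by
    intro y
    have := (hasDerivAt_pow 2 y).div_const 16
    refine this.congr_deriv ?_
    norm_num
    ring
  have hrpos : ∀ y : ℝ, 0 < y → (0:ℝ) < y ^ 2 / 16 := fun y hy => by positivity
  -- first derivative of w
  have hdw : ∀ y : ℝ, 0 < y →
      HasDerivAt w (deriv u (y ^ 2 / 16) * (y / 8) + 1 / y) y := by
    intro y hy
    have h1 : HasDerivAt (fun t : ℝ => u (t ^ 2 / 16)) (deriv u (y ^ 2 / 16) * (y / 8)) y :=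
      (hdu _ (hrpos y hy)).comp y (hinner y)
    have h2 : HasDerivAt (fun t : ℝ => Real.log (t ^ 2 / 16)) ((y ^ 2 / 16)⁻¹ * (y / 8)) y := by
      simpa [Function.comp_def] using
        (Real.hasDerivAt_log (ne_of_gt (hrpos y hy))).comp y (hinner y)
    have h3 := (h1.sub_const (Real.log 2)).add (h2.const_mul (1 / 2 : ℝ))
    rw [hwf]
    refine h3.congr_deriv ?_
    have hy2 : y ^ 2 / 16 ≠ 0 := ne_of_gt (hrpos y hy)
    field_simp
    ring
  intro x hx
  set r : ℝ := x ^ 2 / 16 with hrdef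
  have hr : 0 < r := hrpos x hx
  -- deriv w eventually equals explicit formula
  have hev : deriv w =ᶠ[nhds x] fun y => deriv u (y ^ 2 / 16) * (y / 8) + 1 / y := by
    filter_upwards [isOpen_Ioi.mem_nhds hx] with y hy
    exact (hdw y hy).deriv
  have hdwx : deriv w x = deriv u r * (x / 8) + 1 / x := (hdw x hx).deriv
  -- second derivative
  have h1 : HasDerivAt (fun y : ℝ => deriv u (y ^ 2 / 16))
      (deriv (deriv u) r * (x / 8)) x := by
    rw [hrdef]; exact (hddu _ (hrpos x hx)).comp x (hinner x)
  have h2 : HasDerivAt (fun y : ℝ => deriv u (y ^ 2 / 16) * (y / 8) + 1 / y)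
      ((deriv (deriv u) r * (x / 8)) * (x / 8) + deriv u r * (1 / 8) + -(1 / x ^ 2)) x := by
    have ha : HasDerivAt (fun y : ℝ => y / 8) (1 / 8) x := (hasDerivAt_id x).div_const 8
    have hb : HasDerivAt (fun y : ℝ => 1 / y) (-(1 / x ^ 2)) x := by
      simpa using (hasDerivAt_inv (ne_of_gt hx))
    simpa [hrdef] using (h1.fun_mul ha).fun_add hb
  have hddwx : deriv (deriv w) x =
      (deriv (deriv u) r * (x / 8)) * (x / 8) + deriv u r * (1 / 8) + -(1 / x ^ 2) := by
    rw [Filter.EventuallyEq.deriv_eq hev]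
    exact h2.deriv
  -- exponentials
  have h2w : Real.exp (2 * w x) = Real.exp (2 * u r) * r / 4 := by
    have : 2 * w x = 2 * u r + Real.log r - Real.log 4 := by
      rw [hw x]
      have : Real.log 4 = 2 * Real.log 2 := by
        rw [show (4:ℝ) = 2 ^ 2 by norm_num, Real.log_pow]; push_cast; ring
      rw [this]; ring
    rw [this, Real.exp_sub, Real.exp_add, Real.exp_log hr, Real.exp_log (by norm_num : (0:ℝ) < 4)]
  have h2w' : Real.exp (-(2 * w x)) = Real.exp (-(2 * u r)) * 4 / r := by
    rw [show -(2 * w x) = -(2 * u r + Real.log r - Real.log 4) by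
      rw [hw x]
      have : Real.log 4 = 2 * Real.log 2 := by
        rw [show (4:ℝ) = 2 ^ 2 by norm_num, Real.log_pow]; push_cast; ring
      rw [this]; ring]
    rw [Real.exp_neg, Real.exp_sub, Real.exp_add, Real.exp_log hr,
      Real.exp_log (by norm_num : (0:ℝ) < 4), Real.exp_neg]
    field_simp
  have heqr := heq r hr
  rw [hddwx, hdwx, Real.sinh_eq, h2w, h2w']
  have hx0 : x ≠ 0 := ne_of_gt hx
  have hr0 : r ≠ 0 := ne_of_gt hr
  have hrx : r = x ^ 2 / 16 := hrdef
  rw [hrdef] at heqr h2w h2w' ⊢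
  field_simp at heqr ⊢
  linear_combination 64 * heqr
end
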